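/- With the setup below, there exists R₀ < ∞ depending only on d such that for all R ≥ max(R₀, 2·max_{3≤i≤d}|p_i|) and all integers m ≥ 1 the following holds: for all distinct integers i ≠ j such that the balls D_i = B((i,0,…,0), 1/8) and D_j = B((j,0,…,0), 1/8) are contained in 𝔠_{1,m}, and every axis-parallel closed cube B₁ ⊂ B¹_{R^m} of sidelength 1, no line of ℝ^d intersects all three of the sets B₁, D_i and D_j. In other words, the sets of lines meeting both D_i and B₁, taken over the integers i with D_i ⊂ 𝔠_{1,m}, are pairwise disjoint. -/

import Mathlib

open MeasureTheory
open scoped ENNReal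

noncomputable section

/-- A line in `ℝ^d`: a set of the form `{a + t • v : t ∈ ℝ}` with `v ≠ 0`. -/
def IsLine {d : ℕ} (L : Set (EuclideanSpace ℝ (Fin d))) : Prop :=
  ∃ a v : EuclideanSpace ℝ (Fin d), v ≠ 0 ∧ L = {x | ∃ t : ℝ, x = a + t • v}

/-- The standard basis vector of `ℝ^d` with a `1` in (0-indexed) coordinate `i`
(junk value `0` if `i ≥ d`). -/
def stdv (d i : ℕ) : EuclideanSpace ℝ (Fin d) :=
  if h : i < d then EuclideanSpace.single (⟨i, h⟩ : Fin d) 1 else 0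

/-- The (0-indexed) `i`-th coordinate of a vector (junk value `0` if `i ≥ d`). -/
def coordNat {d : ℕ} (x : EuclideanSpace ℝ (Fin d)) (i : ℕ) : ℝ :=
  if h : i < d then x ⟨i, h⟩ else 0

/-- The cylinder of radius `r` around a set `L`. -/
def cylinder {d : ℕ} (L : Set (EuclideanSpace ℝ (Fin d))) (r : ℝ) :
    Set (EuclideanSpace ℝ (Fin d)) :=
  {x | Metric.infDist x L ≤ r}

/-- The line `L₁ = {t • e₁ : t ∈ ℝ}`. -/
def lineOne (d : ℕ) : Set (EuclideanSpace ℝ (Fin d)) := {x | ∃ t : ℝ, x = t • stdv d 0}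

/-- The cylinder `𝔠₁` of radius `√d` around `L₁`. -/
def cylOne (d : ℕ) : Set (EuclideanSpace ℝ (Fin d)) := cylinder (lineOne d) (Real.sqrt d)

/-- The piece `𝔠_{1,m} = {x ∈ 𝔠₁ : R^{m-1}/2 ≤ |x₁| < R^m/2 - 10√d}`. -/
def cylOnePiece (d : ℕ) (R : ℝ) (m : ℕ) : Set (EuclideanSpace ℝ (Fin d)) :=
  {x ∈ cylOne d | R ^ (m - 1) / 2 ≤ |coordNat x 0| ∧
    |coordNat x 0| < R ^ m / 2 - 10 * Real.sqrt d}

/-- The direction vector `(l₁, l₂, 0, …, 0)` of the line `L₂`. -/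
def dirTwo (d : ℕ) (l1 l2 : ℝ) : EuclideanSpace ℝ (Fin d) := l1 • stdv d 0 + l2 • stdv d 1

/-- The line `L₂ = {p + t • (l₁, l₂, 0, …, 0) : t ∈ ℝ}`. -/
def lineTwo (d : ℕ) (p : EuclideanSpace ℝ (Fin d)) (l1 l2 : ℝ) :
    Set (EuclideanSpace ℝ (Fin d)) :=
  {x | ∃ t : ℝ, x = p + t • dirTwo d l1 l2}

/-- The cylinder `𝔠₂` of radius `√d` around `L₂`. -/
def cylTwo (d : ℕ) (p : EuclideanSpace ℝ (Fin d)) (l1 l2 : ℝ) :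
    Set (EuclideanSpace ℝ (Fin d)) :=
  cylinder (lineTwo d p l1 l2) (Real.sqrt d)

/-- Orthogonal projection onto the affine line `L₂` (valid when `(l₁,l₂)` is a unit vector). -/
def projLineTwo (d : ℕ) (p : EuclideanSpace ℝ (Fin d)) (l1 l2 : ℝ)
    (x : EuclideanSpace ℝ (Fin d)) : EuclideanSpace ℝ (Fin d) :=
  p + (inner ℝ (x - p) (dirTwo d l1 l2) : ℝ) • dirTwo d l1 l2

/-- The piece `𝔠_{2,m} = {x ∈ 𝔠₂ : R^{m-1}/2 ≤ |Π_{L₂}(x) - p| < R^m/2 - 10√d}`. -/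
def cylTwoPiece (d : ℕ) (p : EuclideanSpace ℝ (Fin d)) (l1 l2 R : ℝ) (m : ℕ) :
    Set (EuclideanSpace ℝ (Fin d)) :=
  {x ∈ cylTwo d p l1 l2 | R ^ (m - 1) / 2 ≤ dist (projLineTwo d p l1 l2 x) p ∧
    dist (projLineTwo d p l1 l2 x) p < R ^ m / 2 - 10 * Real.sqrt d}

/-- The point `q_{i,m} = p + N·R^m·e_{i+3}` (`i` is 1-based), where `N = 10d + 1`. -/
def qpt (d : ℕ) (p : EuclideanSpace ℝ (Fin d)) (R : ℝ) (m i : ℕ) :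
    EuclideanSpace ℝ (Fin d) :=
  p + ((10 * d + 1 : ℝ) * R ^ m) • stdv d (i + 2)

/-- The box `B^i_{R^m} = q_{i,m} + [-R^m/2, R^m/2]^d` (`i` is 1-based). -/
def bigBox (d : ℕ) (p : EuclideanSpace ℝ (Fin d)) (R : ℝ) (m i : ℕ) :
    Set (EuclideanSpace ℝ (Fin d)) :=
  {x | ∀ j : Fin d, |x j - qpt d p R m i j| ≤ R ^ m / 2}

/-- A line `L` meets both sets `S` and `T`, i.e. `L ∈ ℒ_S ∩ ℒ_T`. -/
def meets {d : ℕ} (L S T : Set (EuclideanSpace ℝ (Fin d))) : Prop :=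
  (L ∩ S).Nonempty ∧ (L ∩ T).Nonempty

/-- Orthogonal projection onto the hyperplane `θ^⊥` (for `θ` a unit vector). -/
def projHyp {d : ℕ} (θ x : EuclideanSpace ℝ (Fin d)) : EuclideanSpace ℝ (Fin d) :=
  x - (inner ℝ x θ : ℝ) • θ

/-- The rotation-invariant (uniform) probability measure on the unit sphere of `ℝ^d`. -/
def sphereUniform (d : ℕ) :
    Measure (Metric.sphere (0 : EuclideanSpace ℝ (Fin d)) 1) :=
  (((volume : Measure (EuclideanSpace ℝ (Fin d))).toSphere Set.univ)⁻¹) •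
    ((volume : Measure (EuclideanSpace ℝ (Fin d))).toSphere)

/-- The axis-parallel closed cube of sidelength 1 centered at `q`. -/
def unitCube {d : ℕ} (q : EuclideanSpace ℝ (Fin d)) : Set (EuclideanSpace ℝ (Fin d)) :=
  {x | ∀ j : Fin d, |x j - q j| ≤ 1 / 2}

lemma coord_abs_le_dist {d : ℕ} (x y : EuclideanSpace ℝ (Fin d)) (k : Fin d) :
    |x k - y k| ≤ dist x y := by
  rw [EuclideanSpace.dist_eq]
  have h1 : |x k - y k| = Real.sqrt (dist (x k) (y k) ^ 2) := by
    rw [Real.sqrt_sq_eq_abs, Real.dist_eq, abs_abs]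
  rw [h1]
  exact Real.sqrt_le_sqrt (Finset.single_le_sum (f := fun i => dist (x i) (y i) ^ 2) (fun i _ => sq_nonneg _) (Finset.mem_univ k))

set_option maxHeartbeats 1000000 in
theorem stmt16 (d : ℕ) (hd : 4 ≤ d) :
    ∃ R₀ : ℝ, ∀ p : EuclideanSpace ℝ (Fin d),
      coordNat p 0 = 0 → coordNat p 1 = 0 →
      ∀ R : ℝ, R₀ ≤ R → (∀ i : Fin d, 2 * |p i| ≤ R) →
      ∀ m : ℕ, 1 ≤ m →
      ∀ i j : ℤ, i ≠ j →
        Metric.closedBall (EuclideanSpace.single (⟨0, by omega⟩ : Fin d) (i : ℝ)) (1 / 8) ⊆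
          cylOnePiece d R m →
        Metric.closedBall (EuclideanSpace.single (⟨0, by omega⟩ : Fin d) (j : ℝ)) (1 / 8) ⊆
          cylOnePiece d R m →
      ∀ q : EuclideanSpace ℝ (Fin d), unitCube q ⊆ bigBox d p R m 1 →
      ∀ L : Set (EuclideanSpace ℝ (Fin d)), IsLine L →
        ¬ ((L ∩ unitCube q).Nonempty ∧
           (L ∩ Metric.closedBall
              (EuclideanSpace.single (⟨0, by omega⟩ : Fin d) (i : ℝ)) (1 / 8)).Nonempty ∧
           (L ∩ Metric.closedBall
              (EuclideanSpace.single (⟨0, by omega⟩ : Fin d) (j : ℝ)) (1 / 8)).Nonempty) := by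
  refine ⟨2, ?_⟩
  intro p hp0 hp1 R hR hpR m hm i j hij hDi hDj q hq L hL h
  obtain ⟨⟨z, hzL, hzq⟩, ⟨x, hxL, hxB⟩, ⟨y, hyL, hyB⟩⟩ := h
  obtain ⟨a, v, hv, rfl⟩ := hL
  obtain ⟨t3, rfl⟩ := hzL
  obtain ⟨t1, rfl⟩ := hxL
  obtain ⟨t2, rfl⟩ := hyL
  have h0d : (0:ℕ) < d := by omega
  have h3d : (3:ℕ) < d := by omega
  set k0 : Fin d := ⟨0, h0d⟩ with hk0
  set k3 : Fin d := ⟨3, h3d⟩ with hk3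
  have hne : k3 ≠ k0 := by simp [hk0, hk3, Fin.ext_iff]
  set T : ℝ := R ^ m with hT
  have hR1 : (1:ℝ) ≤ R := by linarith
  have hT1 : (1:ℝ) ≤ T := one_le_pow₀ hR1
  have hRT : R ≤ T := le_self_pow₀ hR1 (by omega)
  -- coordinates of points
  set x0 : ℝ := (a + t1 • v) k0
  set x3 : ℝ := (a + t1 • v) k3
  set y0 : ℝ := (a + t2 • v) k0
  set y3 : ℝ := (a + t2 • v) k3
  set z0 : ℝ := (a + t3 • v) k0
  set z3 : ℝ := (a + t3 • v) k3
  -- collinearity identity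
  have E : (z0 - x0) * (y3 - x3) = (z3 - x3) * (y0 - x0) := by
    simp only [x0, x3, y0, y3, z0, z3, PiLp.add_apply, PiLp.smul_apply, smul_eq_mul]
    ring
  -- bounds from the balls
  have hsing0 : EuclideanSpace.single k0 (i:ℝ) k0 = (i:ℝ) := by
    simp [EuclideanSpace.single_apply]
  have hsing3 : EuclideanSpace.single k0 (i:ℝ) k3 = 0 := by
    simp [EuclideanSpace.single_apply, hne]
  have hsing0' : EuclideanSpace.single k0 (j:ℝ) k0 = (j:ℝ) := by
    simp [EuclideanSpace.single_apply]
  have hsing3' : EuclideanSpace.single k0 (j:ℝ) k3 = 0 := by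
    simp [EuclideanSpace.single_apply, hne]
  have hxd := Metric.mem_closedBall.mp hxB
  have hyd := Metric.mem_closedBall.mp hyB
  have hx0 : |x0 - (i:ℝ)| ≤ 1/8 := by
    have := (coord_abs_le_dist (a + t1 • v) (EuclideanSpace.single k0 (i:ℝ)) k0).trans hxd
    rwa [hsing0] at this
  have hx3 : |x3| ≤ 1/8 := by
    have := (coord_abs_le_dist (a + t1 • v) (EuclideanSpace.single k0 (i:ℝ)) k3).trans hxd
    rwa [hsing3, sub_zero] at this
  have hy0 : |y0 - (j:ℝ)| ≤ 1/8 := by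
    have := (coord_abs_le_dist (a + t2 • v) (EuclideanSpace.single k0 (j:ℝ)) k0).trans hyd
    rwa [hsing0'] at this
  have hy3 : |y3| ≤ 1/8 := by
    have := (coord_abs_le_dist (a + t2 • v) (EuclideanSpace.single k0 (j:ℝ)) k3).trans hyd
    rwa [hsing3', sub_zero] at this
  -- |i| < T/2
  have hsqrt : (0:ℝ) ≤ Real.sqrt d := Real.sqrt_nonneg _
  have hiT : |(i:ℝ)| < T / 2 := by
    have hc := hDi (Metric.mem_closedBall_self (by norm_num))
    have h2 := hc.2.2
    have : |coordNat (EuclideanSpace.single k0 (i:ℝ)) 0| = |(i:ℝ)| := by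
      simp [coordNat, h0d, hsing0, hk0]
    rw [this] at h2
    calc |(i:ℝ)| < R ^ m / 2 - 10 * Real.sqrt d := h2
      _ ≤ T / 2 := by rw [hT]; nlinarith
  -- |i - j| ≥ 1
  have hij1 : (1:ℝ) ≤ |(i:ℝ) - (j:ℝ)| := by
    have : (1:ℤ) ≤ |i - j| := Int.one_le_abs (sub_ne_zero.mpr hij)
    exact_mod_cast this
  have hD : (3:ℝ)/4 ≤ |y0 - x0| := by
    have t1 : |(i:ℝ) - (j:ℝ)| ≤ |(i:ℝ) - x0| + |x0 - y0| + |y0 - (j:ℝ)| := by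
      calc |(i:ℝ) - (j:ℝ)| = |((i:ℝ) - x0) + (x0 - y0) + (y0 - (j:ℝ))| := by ring_nf
        _ ≤ _ := abs_add_three _ _ _
    rw [abs_sub_comm (i:ℝ) x0] at t1
    rw [abs_sub_comm y0 x0]
    linarith
  -- bounds from the big box
  have hzB := hq hzq
  have hqpt0 : qpt d p R m 1 k0 = 0 := by
    have hp0' : p k0 = 0 := by simpa [coordNat, h0d] using hp0
    simp [qpt, stdv, h3d, PiLp.add_apply, PiLp.smul_apply, EuclideanSpace.single_apply,
      hne, hp0', hk0, hk3]
    exact hp0'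
  have hqpt3 : qpt d p R m 1 k3 = p k3 + (10 * d + 1) * T := by
    simp [qpt, stdv, h3d, PiLp.add_apply, PiLp.smul_apply, EuclideanSpace.single_apply,
      hk3, hT]
  have hz0 : |z0| ≤ T / 2 := by
    have := hzB k0
    rwa [hqpt0, sub_zero] at this
  have hz3 : |z3 - (p k3 + (10 * d + 1) * T)| ≤ T / 2 := by
    have := hzB k3
    rwa [hqpt3] at this
  have hp3 : |p k3| ≤ T / 2 := by
    have := hpR k3
    linarith [abs_nonneg (p k3)]
  have hd41 : (41:ℝ) ≤ 10 * d + 1 := by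
    have : (4:ℝ) ≤ d := by exact_mod_cast hd
    linarith
  have hz3lb : 40 * T ≤ z3 := by
    have h1 := abs_le.mp hz3
    have h2 := abs_le.mp hp3
    nlinarith
  have hC : 40 * T - 1/8 ≤ |z3 - x3| := by
    have h1 := abs_le.mp hx3
    rw [abs_of_nonneg (by linarith)]
    linarith
  have hA : |z0 - x0| ≤ T + 1/4 := by
    have h1 := abs_le.mp hz0
    have h2 := abs_le.mp hx0
    have h3 := abs_le.mp hiT.le
    rw [abs_le]; constructor <;> linarith
  have hB : |y3 - x3| ≤ 1/4 := by
    have h1 := abs_le.mp hx3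
    have h2 := abs_le.mp hy3
    rw [abs_le]; constructor <;> linarith
  have E' : |z0 - x0| * |y3 - x3| = |z3 - x3| * |y0 - x0| := by
    rw [← abs_mul, ← abs_mul, E]
  have h1 : (40 * T - 1/8) * (3/4) ≤ |z3 - x3| * |y0 - x0| :=
    mul_le_mul hC hD (by norm_num) (abs_nonneg _)
  have h2 : |z0 - x0| * |y3 - x3| ≤ (T + 1/4) * (1/4) :=
    mul_le_mul hA hB (abs_nonneg _) (by linarith)
  rw [E'] at h2
  nlinarith
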